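/- (CLEM E-step: second latent expectation.) Let ν>0, σ²>0, r∈(0,1) and μ₁,μ₂∈ℝ. For all y₁,y₂∈ℝ, with y_i* = y_i − μ_i and v(u) = 1 + (1−r)u²/(νσ²), one has ∫₀^∞ ∫₀^∞ z₂ · f(y₁|z₁,μ₁) · f(y₂|z₂,μ₂) · g_{ν/2,r}(z₁,z₂) dz₁ dz₂ = (2(1−r)^{ν/2+2} Γ((ν+1)/2) Γ((ν+3)/2)/(π ν² σ² Γ(ν/2)²)) · ₂F₁((ν+1)/2, (ν+3)/2; ν/2; r/(v(y₁*)v(y₂*))) / (v(y₁*)^{(ν+1)/2} · v(y₂*)^{(ν+3)/2}). Dividing by the pairwise joint density f(y₁,y₂) gives the CLEM conditional expectation ζ₂ = E(Z_{t−i} | Y_t=y₁, Y_{t−i}=y₂). -/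

import Mathlib

open MeasureTheory Real Set

/-- Modified Bessel function of the first kind (series form). -/
noncomputable def besselI (α x : ℝ) : ℝ :=
  ∑' k : ℕ, (x / 2) ^ (2 * (k : ℝ) + α) / (Real.Gamma ((k : ℝ) + α + 1) * (Nat.factorial k : ℝ))

/-- Gamma density with rate `γ` and shape `α`. -/
noncomputable def gammaPdf (γ α z : ℝ) : ℝ :=
  γ ^ α * z ^ (α - 1) * Real.exp (-γ * z) / Real.Gamma α

/-- Kibble bivariate gamma density with parameters `φ > 0` and `r ∈ (0,1)`. -/
noncomputable def kibble (φ r z₁ z₂ : ℝ) : ℝ :=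
  φ ^ (φ + 1) / ((1 - r) * Real.Gamma φ) * (z₁ * z₂ / r) ^ ((φ - 1) / 2) *
    Real.exp (-φ * (z₁ + z₂) / (1 - r)) *
    besselI (φ - 1) (2 * φ * Real.sqrt (r * z₁ * z₂) / (1 - r))

/-- Conditional normal density of the NSVt model given latent `z`: `N(μ, σ²/z)`. -/
noncomputable def normCond (σ μ y z : ℝ) : ℝ :=
  Real.sqrt z / (Real.sqrt (2 * Real.pi) * σ) * Real.exp (-z * (y - μ) ^ 2 / (2 * σ ^ 2))

/-- Student-t density with `ν` degrees of freedom, location `μ` and scale `σ`. -/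
noncomputable def studentTPdf (ν μ σ y : ℝ) : ℝ :=
  Real.Gamma ((ν + 1) / 2) / (Real.Gamma (ν / 2) * Real.sqrt (Real.pi * ν) * σ) *
    (1 + (y - μ) ^ 2 / (ν * σ ^ 2)) ^ (-(ν + 1) / 2)

/-- Gauss hypergeometric series `₂F₁(a₁,a₂;b;x)`. -/
noncomputable def hyp2F1 (a₁ a₂ b x : ℝ) : ℝ :=
  ∑' k : ℕ, Real.Gamma ((k : ℝ) + a₁) * Real.Gamma ((k : ℝ) + a₂) * Real.Gamma b /
    (Real.Gamma a₁ * Real.Gamma a₂ * Real.Gamma ((k : ℝ) + b)) * x ^ k / (Nat.factorial k : ℝ)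

/-- Confluent hypergeometric (Kummer) series `₁F₁(a;b;x)`. -/
noncomputable def hyp1F1 (a b x : ℝ) : ℝ :=
  ∑' k : ℕ, Real.Gamma ((k : ℝ) + a) * Real.Gamma b /
    (Real.Gamma a * Real.Gamma ((k : ℝ) + b)) * x ^ k / (Nat.factorial k : ℝ)

/-- Generalized Laguerre polynomial of degree `n` with parameter `α`. -/
noncomputable def laguerreL (n : ℕ) (α x : ℝ) : ℝ :=
  ∑ i ∈ Finset.range (n + 1),
    (-1 : ℝ) ^ i * Real.Gamma ((n : ℝ) + α + 1) /
      (Real.Gamma (α + (i : ℝ) + 1) * (Nat.factorial (n - i) : ℝ) * (Nat.factorial i : ℝ)) * x ^ i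

/-- Negative binomial pmf with parameters `φ > 0` and `r ∈ (0,1)`. -/
noncomputable def nbinomPmf (φ r : ℝ) (u : ℕ) : ℝ :=
  Real.Gamma (φ + u) / (Real.Gamma φ * (Nat.factorial u : ℝ)) * (1 - r) ^ φ * r ^ u

/-- The quantity `ω(y₁,y₂)` appearing in the pairwise joint density of the NSVt model. -/
noncomputable def omegaFn (ν σ r μ₁ μ₂ y₁ y₂ : ℝ) : ℝ :=
  ((1 + (1 - r) * (y₁ - μ₁) ^ 2 / (ν * σ ^ 2)) *
    (1 + (1 - r) * (y₂ - μ₂) ^ 2 / (ν * σ ^ 2)))⁻¹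

/-- Pairwise joint density of the NSVt model (with `r = ρʲ`). -/
noncomputable def pairDensity (ν σ r μ₁ μ₂ y₁ y₂ : ℝ) : ℝ :=
  (1 - r) ^ (ν / 2 + 1) / (Real.pi * ν * σ ^ 2) *
    (Real.Gamma ((ν + 1) / 2) / Real.Gamma (ν / 2)) ^ 2 *
    omegaFn ν σ r μ₁ μ₂ y₁ y₂ ^ ((ν + 1) / 2) *
    hyp2F1 ((ν + 1) / 2) ((ν + 1) / 2) (ν / 2) (r * omegaFn ν σ r μ₁ μ₂ y₁ y₂)

-- ==================== auxiliary lemmas ====================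
open Filter

lemma aux_tendsto (a b : ℝ) :
    Tendsto (fun k : ℕ => ((k:ℝ)+a)/((k:ℝ)+b)) atTop (nhds 1) := by
  have hb : Tendsto (fun k : ℕ => (k:ℝ)+b) atTop atTop :=
    tendsto_atTop_add_const_right _ b tendsto_natCast_atTop_atTop
  have h0 : Tendsto (fun k : ℕ => (a-b)/((k:ℝ)+b)) atTop (nhds 0) :=
    Tendsto.div_atTop tendsto_const_nhds hb
  have h1 : Tendsto (fun k : ℕ => 1 + (a-b)/((k:ℝ)+b)) atTop (nhds 1) := by
    simpa using tendsto_const_nhds.add h0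
  refine Tendsto.congr' ?_ h1
  filter_upwards [hb.eventually_gt_atTop 0] with k hk
  field_simp
  ring

lemma aux_summable2 {a₁ a₂ b x : ℝ} (ha₁ : 0 < a₁) (ha₂ : 0 < a₂) (hb : 0 < b)
    (hx : 0 < x) (hx1 : x < 1) :
    Summable (fun k : ℕ => Real.Gamma ((k:ℝ)+a₁) * Real.Gamma ((k:ℝ)+a₂) /
      (Real.Gamma ((k:ℝ)+b) * (Nat.factorial k : ℝ)) * x ^ k) := by
  set f := fun k : ℕ => Real.Gamma ((k:ℝ)+a₁) * Real.Gamma ((k:ℝ)+a₂) /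
      (Real.Gamma ((k:ℝ)+b) * (Nat.factorial k : ℝ)) * x ^ k with hf
  have hfpos : ∀ k, 0 < f k := by
    intro k
    have g1 : 0 < Real.Gamma ((k:ℝ)+a₁) := Real.Gamma_pos_of_pos (by positivity)
    have g2 : 0 < Real.Gamma ((k:ℝ)+a₂) := Real.Gamma_pos_of_pos (by positivity)
    have g3 : 0 < Real.Gamma ((k:ℝ)+b) := Real.Gamma_pos_of_pos (by positivity)
    have g4 : (0:ℝ) < (Nat.factorial k : ℝ) := by positivity
    rw [hf]; positivity
  apply summable_of_ratio_test_tendsto_lt_one hx1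
    (Eventually.of_forall fun n => (hfpos n).ne')
  have key : ∀ n : ℕ, ‖f (n+1)‖/‖f n‖ =
      (((n:ℝ)+a₁)/((n:ℝ)+b)) * ((((n:ℝ)+a₂)/((n:ℝ)+1)) * x) := by
    intro n
    rw [Real.norm_of_nonneg (hfpos _).le, Real.norm_of_nonneg (hfpos _).le, hf]
    simp only [Nat.cast_add, Nat.cast_one]
    have e1 : Real.Gamma ((n:ℝ)+1+a₁) = ((n:ℝ)+a₁) * Real.Gamma ((n:ℝ)+a₁) := by
      rw [show (n:ℝ)+1+a₁ = ((n:ℝ)+a₁)+1 by ring, Real.Gamma_add_one (by positivity)]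
    have e2 : Real.Gamma ((n:ℝ)+1+a₂) = ((n:ℝ)+a₂) * Real.Gamma ((n:ℝ)+a₂) := by
      rw [show (n:ℝ)+1+a₂ = ((n:ℝ)+a₂)+1 by ring, Real.Gamma_add_one (by positivity)]
    have e3 : Real.Gamma ((n:ℝ)+1+b) = ((n:ℝ)+b) * Real.Gamma ((n:ℝ)+b) := by
      rw [show (n:ℝ)+1+b = ((n:ℝ)+b)+1 by ring, Real.Gamma_add_one (by positivity)]
    have e4 : (Nat.factorial (n+1) : ℝ) = ((n:ℝ)+1) * (Nat.factorial n : ℝ) := by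
      push_cast [Nat.factorial_succ]; ring
    have g1 : (0:ℝ) < Real.Gamma ((n:ℝ)+a₁) := Real.Gamma_pos_of_pos (by positivity)
    have g2 : (0:ℝ) < Real.Gamma ((n:ℝ)+a₂) := Real.Gamma_pos_of_pos (by positivity)
    have g3 : (0:ℝ) < Real.Gamma ((n:ℝ)+b) := Real.Gamma_pos_of_pos (by positivity)
    have g4 : (0:ℝ) < (Nat.factorial n : ℝ) := by positivity
    rw [e1, e2, e3, e4, pow_succ]
    field_simp
  rw [show (fun n : ℕ => ‖f (n+1)‖/‖f n‖) = fun n : ℕ =>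
      (((n:ℝ)+a₁)/((n:ℝ)+b)) * ((((n:ℝ)+a₂)/((n:ℝ)+1)) * x) from funext key]
  have := (aux_tendsto a₁ b).mul ((aux_tendsto a₂ 1).mul_const x)
  simpa using this

lemma aux_summable1 {a b x : ℝ} (ha : 0 < a) (hb : 0 < b) (hx : 0 < x) :
    Summable (fun k : ℕ => Real.Gamma ((k:ℝ)+a) /
      (Real.Gamma ((k:ℝ)+b) * (Nat.factorial k : ℝ)) * x ^ k) := by
  set f := fun k : ℕ => Real.Gamma ((k:ℝ)+a) /
      (Real.Gamma ((k:ℝ)+b) * (Nat.factorial k : ℝ)) * x ^ k with hf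
  have hfpos : ∀ k, 0 < f k := by
    intro k
    have g1 : 0 < Real.Gamma ((k:ℝ)+a) := Real.Gamma_pos_of_pos (by positivity)
    have g3 : 0 < Real.Gamma ((k:ℝ)+b) := Real.Gamma_pos_of_pos (by positivity)
    have g4 : (0:ℝ) < (Nat.factorial k : ℝ) := by positivity
    rw [hf]; positivity
  apply summable_of_ratio_test_tendsto_lt_one (by norm_num : (0:ℝ) < 1)
    (Eventually.of_forall fun n => (hfpos n).ne')
  have key : ∀ n : ℕ, ‖f (n+1)‖/‖f n‖ =
      (((n:ℝ)+a)/((n:ℝ)+b)) * ((1/((n:ℝ)+1)) * x) := by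
    intro n
    rw [Real.norm_of_nonneg (hfpos _).le, Real.norm_of_nonneg (hfpos _).le, hf]
    simp only [Nat.cast_add, Nat.cast_one]
    have e1 : Real.Gamma ((n:ℝ)+1+a) = ((n:ℝ)+a) * Real.Gamma ((n:ℝ)+a) := by
      rw [show (n:ℝ)+1+a = ((n:ℝ)+a)+1 by ring, Real.Gamma_add_one (by positivity)]
    have e3 : Real.Gamma ((n:ℝ)+1+b) = ((n:ℝ)+b) * Real.Gamma ((n:ℝ)+b) := by
      rw [show (n:ℝ)+1+b = ((n:ℝ)+b)+1 by ring, Real.Gamma_add_one (by positivity)]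
    have e4 : (Nat.factorial (n+1) : ℝ) = ((n:ℝ)+1) * (Nat.factorial n : ℝ) := by
      push_cast [Nat.factorial_succ]; ring
    have g1 : (0:ℝ) < Real.Gamma ((n:ℝ)+a) := Real.Gamma_pos_of_pos (by positivity)
    have g3 : (0:ℝ) < Real.Gamma ((n:ℝ)+b) := Real.Gamma_pos_of_pos (by positivity)
    have g4 : (0:ℝ) < (Nat.factorial n : ℝ) := by positivity
    rw [e1, e3, e4, pow_succ]
    field_simp
  rw [show (fun n : ℕ => ‖f (n+1)‖/‖f n‖) = fun n : ℕ =>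
      (((n:ℝ)+a)/((n:ℝ)+b)) * ((1/((n:ℝ)+1)) * x) from funext key]
  have h2 : Tendsto (fun n : ℕ => (1/((n:ℝ)+1)) * x) atTop (nhds 0) := by
    simpa using tendsto_one_div_add_atTop_nhds_zero_nat.mul_const x
  have := (aux_tendsto a b).mul h2
  simpa using this

lemma aux_intOn {p b : ℝ} (hp : -1 < p) (hb : 0 < b) :
    IntegrableOn (fun z : ℝ => z ^ p * Real.exp (-(b*z))) (Ioi 0) := by
  have := integrableOn_rpow_mul_exp_neg_mul_rpow hp (by norm_num : (0:ℝ) < 1) hb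
  simpa [Real.rpow_one, neg_mul] using this

lemma aux_intGamma {p b : ℝ} (hp : -1 < p) (hb : 0 < b) :
    ∫ z in Ioi 0, z ^ p * Real.exp (-(b*z)) = (1/b) ^ (p+1) * Real.Gamma (p+1) := by
  have := Real.integral_rpow_mul_exp_neg_mul_Ioi (a := p+1) (by linarith) hb
  simpa using this

/-- Coefficient of the series expansion of the integrand. -/
noncomputable def cAux (φ r σ : ℝ) (k : ℕ) : ℝ :=
  φ ^ (φ + 1) / ((1 - r) * Real.Gamma φ) / (2 * Real.pi * σ ^ 2) *
    (φ / (1 - r)) ^ (2 * (k : ℝ) + (φ - 1)) * r ^ k /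
    (Real.Gamma ((k : ℝ) + φ) * (Nat.factorial k : ℝ))

lemma cAux_pos {φ r σ : ℝ} (hφ : 0 < φ) (hr : 0 < r) (hr1 : r < 1) (hσ : 0 < σ) (k : ℕ) :
    0 < cAux φ r σ k := by
  have hr1' : (0:ℝ) < 1 - r := by linarith
  have hΓφ : 0 < Real.Gamma φ := Real.Gamma_pos_of_pos hφ
  have hΓkφ : 0 < Real.Gamma ((k:ℝ) + φ) := Real.Gamma_pos_of_pos (by positivity)
  have hπ : (0:ℝ) < Real.pi := Real.pi_pos
  unfold cAux
  positivity

lemma term_eq (φ r σ y₁ μ₁ y₂ μ₂ z₁ z₂ : ℝ) (hφ : 0 < φ) (hr : 0 < r) (hr1 : r < 1)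
    (hσ : 0 < σ) (h₁ : 0 < z₁) (h₂ : 0 < z₂) (k : ℕ) :
    z₂ * normCond σ μ₁ y₁ z₁ * normCond σ μ₂ y₂ z₂ *
      (φ ^ (φ + 1) / ((1 - r) * Real.Gamma φ) * (z₁ * z₂ / r) ^ ((φ - 1) / 2) *
        Real.exp (-φ * (z₁ + z₂) / (1 - r)) *
        ((2 * φ * Real.sqrt (r * z₁ * z₂) / (1 - r) / 2) ^ (2 * (k : ℝ) + (φ - 1)) /
          (Real.Gamma ((k : ℝ) + (φ - 1) + 1) * (Nat.factorial k : ℝ))))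
    = cAux φ r σ k *
        (z₁ ^ ((k:ℝ) + φ - 1/2) * Real.exp (-((φ/(1-r) + (y₁-μ₁)^2/(2*σ^2)) * z₁))) *
        (z₂ ^ ((k:ℝ) + φ + 1/2) * Real.exp (-((φ/(1-r) + (y₂-μ₂)^2/(2*σ^2)) * z₂))) := by
  have hr1' : (0:ℝ) < 1 - r := by linarith
  have hπ : (0:ℝ) < Real.pi := Real.pi_pos
  have h2π : (0:ℝ) < 2 * Real.pi := by positivity
  have hΓφ : 0 < Real.Gamma φ := Real.Gamma_pos_of_pos hφ
  have hΓkφ : 0 < Real.Gamma ((k:ℝ) + φ) := Real.Gamma_pos_of_pos (by positivity)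
  have hfac : (0:ℝ) < (Nat.factorial k : ℝ) := by positivity
  have hsr : (0:ℝ) < Real.sqrt (r * z₁ * z₂) := Real.sqrt_pos.mpr (by positivity)
  have hs2π : (0:ℝ) < Real.sqrt (2 * Real.pi) := Real.sqrt_pos.mpr h2π
  have hX : (0:ℝ) < 2 * φ * Real.sqrt (r * z₁ * z₂) / (1 - r) / 2 := by positivity
  have hzz : (0:ℝ) < z₁ * z₂ / r := by positivity
  rw [show (k:ℝ) + (φ - 1) + 1 = (k:ℝ) + φ by ring]
  have hL : 0 < z₂ * normCond σ μ₁ y₁ z₁ * normCond σ μ₂ y₂ z₂ *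
      (φ ^ (φ + 1) / ((1 - r) * Real.Gamma φ) * (z₁ * z₂ / r) ^ ((φ - 1) / 2) *
        Real.exp (-φ * (z₁ + z₂) / (1 - r)) *
        ((2 * φ * Real.sqrt (r * z₁ * z₂) / (1 - r) / 2) ^ (2 * (k : ℝ) + (φ - 1)) /
          (Real.Gamma ((k : ℝ) + φ) * (Nat.factorial k : ℝ)))) := by
    unfold normCond
    have hz1 : (0:ℝ) < Real.sqrt z₁ := Real.sqrt_pos.mpr h₁
    have hz2 : (0:ℝ) < Real.sqrt z₂ := Real.sqrt_pos.mpr h₂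
    positivity
  have hR : 0 < cAux φ r σ k *
        (z₁ ^ ((k:ℝ) + φ - 1/2) * Real.exp (-((φ/(1-r) + (y₁-μ₁)^2/(2*σ^2)) * z₁))) *
        (z₂ ^ ((k:ℝ) + φ + 1/2) * Real.exp (-((φ/(1-r) + (y₂-μ₂)^2/(2*σ^2)) * z₂))) := by
    unfold cAux
    positivity
  rw [← Real.exp_log hL, ← Real.exp_log hR]
  congr 1
  unfold normCond cAux
  rw [Real.sqrt_eq_rpow, Real.sqrt_eq_rpow z₂]
  simp (disch := positivity) only [Real.log_mul, Real.log_div, Real.log_rpow,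
    Real.log_pow, Real.log_exp, Real.log_sqrt, Real.log_one]
  ring

lemma expand_eq (φ r σ y₁ μ₁ y₂ μ₂ z₁ z₂ : ℝ) (hφ : 0 < φ) (hr : 0 < r) (hr1 : r < 1)
    (hσ : 0 < σ) (h₁ : 0 < z₁) (h₂ : 0 < z₂) :
    z₂ * normCond σ μ₁ y₁ z₁ * normCond σ μ₂ y₂ z₂ * kibble φ r z₁ z₂
    = ∑' k : ℕ, cAux φ r σ k *
        (z₁ ^ ((k:ℝ) + φ - 1/2) * Real.exp (-((φ/(1-r) + (y₁-μ₁)^2/(2*σ^2)) * z₁))) *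
        (z₂ ^ ((k:ℝ) + φ + 1/2) * Real.exp (-((φ/(1-r) + (y₂-μ₂)^2/(2*σ^2)) * z₂))) := by
  unfold kibble besselI
  rw [← tsum_mul_left, ← tsum_mul_left]
  exact tsum_congr fun k => term_eq φ r σ y₁ μ₁ y₂ μ₂ z₁ z₂ hφ hr hr1 hσ h₁ h₂ k

lemma inner_int (ν σ r μ₁ μ₂ y₁ y₂ : ℝ) (hν : 0 < ν) (hσ : 0 < σ)
    (hr0 : 0 < r) (hr1 : r < 1) (z₂ : ℝ) (h₂ : 0 < z₂) :
    (∫ z₁ in Ioi (0:ℝ), z₂ * normCond σ μ₁ y₁ z₁ * normCond σ μ₂ y₂ z₂ * kibble (ν/2) r z₁ z₂)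
    = ∑' k : ℕ, cAux (ν/2) r σ k *
        ((1/(ν/2/(1-r) + (y₁-μ₁)^2/(2*σ^2))) ^ ((k:ℝ)+(ν+1)/2) *
          Real.Gamma ((k:ℝ)+(ν+1)/2)) *
        (z₂ ^ ((k:ℝ) + ν/2 + 1/2) *
          Real.exp (-((ν/2/(1-r) + (y₂-μ₂)^2/(2*σ^2)) * z₂))) := by
  have hφ : (0:ℝ) < ν/2 := by linarith
  have hr1' : (0:ℝ) < 1 - r := by linarith
  have hB₁ : (0:ℝ) < ν/2/(1-r) + (y₁-μ₁)^2/(2*σ^2) := by positivity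
  have hB₂ : (0:ℝ) < ν/2/(1-r) + (y₂-μ₂)^2/(2*σ^2) := by positivity
  have hp : ∀ k : ℕ, (-1:ℝ) < (k:ℝ) + ν/2 - 1/2 := by
    intro k
    have : (0:ℝ) ≤ (k:ℝ) := Nat.cast_nonneg k
    linarith
  have e1 : (∫ z₁ in Ioi (0:ℝ),
        z₂ * normCond σ μ₁ y₁ z₁ * normCond σ μ₂ y₂ z₂ * kibble (ν/2) r z₁ z₂)
      = ∫ z₁ in Ioi (0:ℝ), ∑' k : ℕ, cAux (ν/2) r σ k *
          (z₁ ^ ((k:ℝ) + ν/2 - 1/2) *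
            Real.exp (-((ν/2/(1-r) + (y₁-μ₁)^2/(2*σ^2)) * z₁))) *
          (z₂ ^ ((k:ℝ) + ν/2 + 1/2) *
            Real.exp (-((ν/2/(1-r) + (y₂-μ₂)^2/(2*σ^2)) * z₂))) :=
    setIntegral_congr_fun measurableSet_Ioi
      (fun z₁ h₁ => expand_eq (ν/2) r σ y₁ μ₁ y₂ μ₂ z₁ z₂ hφ hr0 hr1 hσ h₁ h₂)
  have hInt : ∀ k : ℕ, Integrable (fun z₁ : ℝ => cAux (ν/2) r σ k *
      (z₁ ^ ((k:ℝ) + ν/2 - 1/2) *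
        Real.exp (-((ν/2/(1-r) + (y₁-μ₁)^2/(2*σ^2)) * z₁))) *
      (z₂ ^ ((k:ℝ) + ν/2 + 1/2) *
        Real.exp (-((ν/2/(1-r) + (y₂-μ₂)^2/(2*σ^2)) * z₂))))
      (volume.restrict (Ioi 0)) := fun k =>
    (((aux_intOn (hp k) hB₁).const_mul _).mul_const _)
  have val : ∀ k : ℕ, (∫ z₁ in Ioi (0:ℝ), cAux (ν/2) r σ k *
      (z₁ ^ ((k:ℝ) + ν/2 - 1/2) *
        Real.exp (-((ν/2/(1-r) + (y₁-μ₁)^2/(2*σ^2)) * z₁))) *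
      (z₂ ^ ((k:ℝ) + ν/2 + 1/2) *
        Real.exp (-((ν/2/(1-r) + (y₂-μ₂)^2/(2*σ^2)) * z₂))))
      = cAux (ν/2) r σ k *
        ((1/(ν/2/(1-r) + (y₁-μ₁)^2/(2*σ^2))) ^ ((k:ℝ)+(ν+1)/2) *
          Real.Gamma ((k:ℝ)+(ν+1)/2)) *
        (z₂ ^ ((k:ℝ) + ν/2 + 1/2) *
          Real.exp (-((ν/2/(1-r) + (y₂-μ₂)^2/(2*σ^2)) * z₂))) := by
    intro k
    rw [integral_mul_const, integral_const_mul, aux_intGamma (hp k) hB₁,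
      show (k:ℝ) + ν/2 - 1/2 + 1 = (k:ℝ) + (ν+1)/2 by ring]
  have normval : ∀ k : ℕ, (∫ z₁ in Ioi (0:ℝ), ‖cAux (ν/2) r σ k *
      (z₁ ^ ((k:ℝ) + ν/2 - 1/2) *
        Real.exp (-((ν/2/(1-r) + (y₁-μ₁)^2/(2*σ^2)) * z₁))) *
      (z₂ ^ ((k:ℝ) + ν/2 + 1/2) *
        Real.exp (-((ν/2/(1-r) + (y₂-μ₂)^2/(2*σ^2)) * z₂)))‖)
      = cAux (ν/2) r σ k *
        ((1/(ν/2/(1-r) + (y₁-μ₁)^2/(2*σ^2))) ^ ((k:ℝ)+(ν+1)/2) *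
          Real.Gamma ((k:ℝ)+(ν+1)/2)) *
        (z₂ ^ ((k:ℝ) + ν/2 + 1/2) *
          Real.exp (-((ν/2/(1-r) + (y₂-μ₂)^2/(2*σ^2)) * z₂))) := by
    intro k
    have hc := cAux_pos hφ hr0 hr1 hσ k
    have e : ∀ z₁ ∈ Ioi (0:ℝ), ‖cAux (ν/2) r σ k *
        (z₁ ^ ((k:ℝ) + ν/2 - 1/2) *
          Real.exp (-((ν/2/(1-r) + (y₁-μ₁)^2/(2*σ^2)) * z₁))) *
        (z₂ ^ ((k:ℝ) + ν/2 + 1/2) *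
          Real.exp (-((ν/2/(1-r) + (y₂-μ₂)^2/(2*σ^2)) * z₂)))‖
        = cAux (ν/2) r σ k *
        (z₁ ^ ((k:ℝ) + ν/2 - 1/2) *
          Real.exp (-((ν/2/(1-r) + (y₁-μ₁)^2/(2*σ^2)) * z₁))) *
        (z₂ ^ ((k:ℝ) + ν/2 + 1/2) *
          Real.exp (-((ν/2/(1-r) + (y₂-μ₂)^2/(2*σ^2)) * z₂))) := by
      intro z₁ h₁
      simp only [mem_Ioi] at h₁
      rw [Real.norm_of_nonneg (by positivity)]
    rw [setIntegral_congr_fun measurableSet_Ioi e, val k]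
  have hSum : Summable (fun k : ℕ => ∫ z₁ in Ioi (0:ℝ), ‖cAux (ν/2) r σ k *
      (z₁ ^ ((k:ℝ) + ν/2 - 1/2) *
        Real.exp (-((ν/2/(1-r) + (y₁-μ₁)^2/(2*σ^2)) * z₁))) *
      (z₂ ^ ((k:ℝ) + ν/2 + 1/2) *
        Real.exp (-((ν/2/(1-r) + (y₂-μ₂)^2/(2*σ^2)) * z₂)))‖) := by
    rw [funext normval]
    have base := (aux_summable1 (a := (ν+1)/2) (b := ν/2)
        (x := r * (ν/2/(1-r))^2 * z₂ / (ν/2/(1-r) + (y₁-μ₁)^2/(2*σ^2)))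
        (by linarith) hφ (by positivity)).mul_left
      ((ν/2) ^ (ν/2 + 1) / ((1 - r) * Real.Gamma (ν/2)) / (2 * Real.pi * σ ^ 2) *
        (ν/2 / (1 - r)) ^ (ν/2 - 1) *
        (1/(ν/2/(1-r) + (y₁-μ₁)^2/(2*σ^2))) ^ ((ν+1)/2) *
        (z₂ ^ (ν/2 + 1/2) * Real.exp (-((ν/2/(1-r) + (y₂-μ₂)^2/(2*σ^2)) * z₂))))
    refine base.congr fun k => ?_
    have hΓφ : 0 < Real.Gamma (ν/2) := Real.Gamma_pos_of_pos hφ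
    have hΓkφ : 0 < Real.Gamma ((k:ℝ) + ν/2) := Real.Gamma_pos_of_pos (by positivity)
    have hΓk1 : 0 < Real.Gamma ((k:ℝ) + (ν+1)/2) := Real.Gamma_pos_of_pos (by positivity)
    have hfac : (0:ℝ) < (Nat.factorial k : ℝ) := by positivity
    have hπ : (0:ℝ) < Real.pi := Real.pi_pos
    have hL : (0:ℝ) < ((ν/2) ^ (ν/2 + 1) / ((1 - r) * Real.Gamma (ν/2)) / (2 * Real.pi * σ ^ 2) *
        (ν/2 / (1 - r)) ^ (ν/2 - 1) *
        (1/(ν/2/(1-r) + (y₁-μ₁)^2/(2*σ^2))) ^ ((ν+1)/2) *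
        (z₂ ^ (ν/2 + 1/2) * Real.exp (-((ν/2/(1-r) + (y₂-μ₂)^2/(2*σ^2)) * z₂)))) *
        (Real.Gamma ((k:ℝ)+(ν+1)/2) /
          (Real.Gamma ((k:ℝ)+ν/2) * (Nat.factorial k : ℝ)) *
          (r * (ν/2/(1-r))^2 * z₂ / (ν/2/(1-r) + (y₁-μ₁)^2/(2*σ^2))) ^ k) := by positivity
    have hR : (0:ℝ) < cAux (ν/2) r σ k *
        ((1/(ν/2/(1-r) + (y₁-μ₁)^2/(2*σ^2))) ^ ((k:ℝ)+(ν+1)/2) *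
          Real.Gamma ((k:ℝ)+(ν+1)/2)) *
        (z₂ ^ ((k:ℝ) + ν/2 + 1/2) *
          Real.exp (-((ν/2/(1-r) + (y₂-μ₂)^2/(2*σ^2)) * z₂))) := by
      have hc := cAux_pos hφ hr0 hr1 hσ k
      positivity
    rw [← Real.exp_log hL, ← Real.exp_log hR]
    congr 1
    unfold cAux
    simp (disch := positivity) only [Real.log_mul, Real.log_div, Real.log_rpow,
      Real.log_pow, Real.log_exp, Real.log_one]
    ring
  exact (e1.trans (integral_tsum_of_summable_integral_norm hInt hSum).symm).trans
    (tsum_congr val)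

set_option maxHeartbeats 2000000 in
/-- CLEM E-step, second latent expectation (numerator of `ζ₂`). -/
theorem clem_zeta2 (ν σ r μ₁ μ₂ : ℝ) (hν : 0 < ν) (hσ : 0 < σ)
    (hr : r ∈ Set.Ioo (0 : ℝ) 1) (y₁ y₂ : ℝ) :
    (∫ z₂ in Set.Ioi (0 : ℝ), ∫ z₁ in Set.Ioi (0 : ℝ),
        z₂ * normCond σ μ₁ y₁ z₁ * normCond σ μ₂ y₂ z₂ * kibble (ν / 2) r z₁ z₂)
      = 2 * (1 - r) ^ (ν / 2 + 2) * Real.Gamma ((ν + 1) / 2) * Real.Gamma ((ν + 3) / 2) /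
          (Real.pi * ν ^ 2 * σ ^ 2 * Real.Gamma (ν / 2) ^ 2) *
          hyp2F1 ((ν + 1) / 2) ((ν + 3) / 2) (ν / 2)
            (r / ((1 + (1 - r) * (y₁ - μ₁) ^ 2 / (ν * σ ^ 2)) *
              (1 + (1 - r) * (y₂ - μ₂) ^ 2 / (ν * σ ^ 2)))) /
          ((1 + (1 - r) * (y₁ - μ₁) ^ 2 / (ν * σ ^ 2)) ^ ((ν + 1) / 2) *
            (1 + (1 - r) * (y₂ - μ₂) ^ 2 / (ν * σ ^ 2)) ^ ((ν + 3) / 2)) := by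
  obtain ⟨hr0, hr1⟩ := hr
  have hφ : (0:ℝ) < ν/2 := by linarith
  have hr1' : (0:ℝ) < 1 - r := by linarith
  have hπ : (0:ℝ) < Real.pi := Real.pi_pos
  have hB₁ : (0:ℝ) < ν/2/(1-r) + (y₁-μ₁)^2/(2*σ^2) := by positivity
  have hB₂ : (0:ℝ) < ν/2/(1-r) + (y₂-μ₂)^2/(2*σ^2) := by positivity
  have hΓφ : 0 < Real.Gamma (ν/2) := Real.Gamma_pos_of_pos hφ
  have hp2 : ∀ k : ℕ, (-1:ℝ) < (k:ℝ) + ν/2 + 1/2 := by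
    intro k
    have : (0:ℝ) ≤ (k:ℝ) := Nat.cast_nonneg k
    linarith
  have e1 : (∫ z₂ in Set.Ioi (0 : ℝ), ∫ z₁ in Set.Ioi (0 : ℝ),
        z₂ * normCond σ μ₁ y₁ z₁ * normCond σ μ₂ y₂ z₂ * kibble (ν / 2) r z₁ z₂)
      = ∫ z₂ in Set.Ioi (0:ℝ), ∑' k : ℕ, cAux (ν/2) r σ k *
          ((1/(ν/2/(1-r) + (y₁-μ₁)^2/(2*σ^2))) ^ ((k:ℝ)+(ν+1)/2) *
            Real.Gamma ((k:ℝ)+(ν+1)/2)) *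
          (z₂ ^ ((k:ℝ) + ν/2 + 1/2) *
            Real.exp (-((ν/2/(1-r) + (y₂-μ₂)^2/(2*σ^2)) * z₂))) :=
    setIntegral_congr_fun measurableSet_Ioi
      (fun z₂ h₂ => inner_int ν σ r μ₁ μ₂ y₁ y₂ hν hσ hr0 hr1 z₂ h₂)
  have hInt₂ : ∀ k : ℕ, Integrable (fun z₂ : ℝ => cAux (ν/2) r σ k *
      ((1/(ν/2/(1-r) + (y₁-μ₁)^2/(2*σ^2))) ^ ((k:ℝ)+(ν+1)/2) *
        Real.Gamma ((k:ℝ)+(ν+1)/2)) *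
      (z₂ ^ ((k:ℝ) + ν/2 + 1/2) *
        Real.exp (-((ν/2/(1-r) + (y₂-μ₂)^2/(2*σ^2)) * z₂))))
      (volume.restrict (Ioi 0)) := fun k =>
    (aux_intOn (hp2 k) hB₂).const_mul _
  have val₂ : ∀ k : ℕ, (∫ z₂ in Set.Ioi (0:ℝ), cAux (ν/2) r σ k *
      ((1/(ν/2/(1-r) + (y₁-μ₁)^2/(2*σ^2))) ^ ((k:ℝ)+(ν+1)/2) *
        Real.Gamma ((k:ℝ)+(ν+1)/2)) *
      (z₂ ^ ((k:ℝ) + ν/2 + 1/2) *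
        Real.exp (-((ν/2/(1-r) + (y₂-μ₂)^2/(2*σ^2)) * z₂))))
      = cAux (ν/2) r σ k *
        ((1/(ν/2/(1-r) + (y₁-μ₁)^2/(2*σ^2))) ^ ((k:ℝ)+(ν+1)/2) *
          Real.Gamma ((k:ℝ)+(ν+1)/2)) *
        ((1/(ν/2/(1-r) + (y₂-μ₂)^2/(2*σ^2))) ^ ((k:ℝ)+(ν+3)/2) *
          Real.Gamma ((k:ℝ)+(ν+3)/2)) := by
    intro k
    rw [integral_const_mul, aux_intGamma (hp2 k) hB₂,
      show (k:ℝ) + ν/2 + 1/2 + 1 = (k:ℝ) + (ν+3)/2 by ring]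
  have normval₂ : ∀ k : ℕ, (∫ z₂ in Set.Ioi (0:ℝ), ‖cAux (ν/2) r σ k *
      ((1/(ν/2/(1-r) + (y₁-μ₁)^2/(2*σ^2))) ^ ((k:ℝ)+(ν+1)/2) *
        Real.Gamma ((k:ℝ)+(ν+1)/2)) *
      (z₂ ^ ((k:ℝ) + ν/2 + 1/2) *
        Real.exp (-((ν/2/(1-r) + (y₂-μ₂)^2/(2*σ^2)) * z₂)))‖)
      = cAux (ν/2) r σ k *
        ((1/(ν/2/(1-r) + (y₁-μ₁)^2/(2*σ^2))) ^ ((k:ℝ)+(ν+1)/2) *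
          Real.Gamma ((k:ℝ)+(ν+1)/2)) *
        ((1/(ν/2/(1-r) + (y₂-μ₂)^2/(2*σ^2))) ^ ((k:ℝ)+(ν+3)/2) *
          Real.Gamma ((k:ℝ)+(ν+3)/2)) := by
    intro k
    have hc := cAux_pos hφ hr0 hr1 hσ k
    have hΓk1 : 0 < Real.Gamma ((k:ℝ) + (ν+1)/2) := Real.Gamma_pos_of_pos (by positivity)
    have e : ∀ z₂ ∈ Ioi (0:ℝ), ‖cAux (ν/2) r σ k *
        ((1/(ν/2/(1-r) + (y₁-μ₁)^2/(2*σ^2))) ^ ((k:ℝ)+(ν+1)/2) *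
          Real.Gamma ((k:ℝ)+(ν+1)/2)) *
        (z₂ ^ ((k:ℝ) + ν/2 + 1/2) *
          Real.exp (-((ν/2/(1-r) + (y₂-μ₂)^2/(2*σ^2)) * z₂)))‖
        = cAux (ν/2) r σ k *
        ((1/(ν/2/(1-r) + (y₁-μ₁)^2/(2*σ^2))) ^ ((k:ℝ)+(ν+1)/2) *
          Real.Gamma ((k:ℝ)+(ν+1)/2)) *
        (z₂ ^ ((k:ℝ) + ν/2 + 1/2) *
          Real.exp (-((ν/2/(1-r) + (y₂-μ₂)^2/(2*σ^2)) * z₂))) := by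
      intro z₂ h₂
      simp only [mem_Ioi] at h₂
      rw [Real.norm_of_nonneg (by positivity)]
    rw [setIntegral_congr_fun measurableSet_Ioi e, val₂ k]
  have hA : (0:ℝ) < ν/2/(1-r) := by positivity
  have hs₁ : (0:ℝ) ≤ (y₁-μ₁)^2/(2*σ^2) := by positivity
  have hs₂ : (0:ℝ) ≤ (y₂-μ₂)^2/(2*σ^2) := by positivity
  have hq : (ν/2/(1-r))^2 ≤ (ν/2/(1-r) + (y₁-μ₁)^2/(2*σ^2)) *
      (ν/2/(1-r) + (y₂-μ₂)^2/(2*σ^2)) := by nlinarith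
  have hx2 : (0:ℝ) < r * (ν/2/(1-r))^2 /
      ((ν/2/(1-r) + (y₁-μ₁)^2/(2*σ^2)) * (ν/2/(1-r) + (y₂-μ₂)^2/(2*σ^2))) := by positivity
  have hx21 : r * (ν/2/(1-r))^2 /
      ((ν/2/(1-r) + (y₁-μ₁)^2/(2*σ^2)) * (ν/2/(1-r) + (y₂-μ₂)^2/(2*σ^2))) < 1 := by
    have hle : r * (ν/2/(1-r))^2 /
        ((ν/2/(1-r) + (y₁-μ₁)^2/(2*σ^2)) * (ν/2/(1-r) + (y₂-μ₂)^2/(2*σ^2))) ≤ r := by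
      rw [div_le_iff₀ (by positivity)]
      nlinarith
    linarith
  have hSum₂ : Summable (fun k : ℕ => ∫ z₂ in Set.Ioi (0:ℝ), ‖cAux (ν/2) r σ k *
      ((1/(ν/2/(1-r) + (y₁-μ₁)^2/(2*σ^2))) ^ ((k:ℝ)+(ν+1)/2) *
        Real.Gamma ((k:ℝ)+(ν+1)/2)) *
      (z₂ ^ ((k:ℝ) + ν/2 + 1/2) *
        Real.exp (-((ν/2/(1-r) + (y₂-μ₂)^2/(2*σ^2)) * z₂)))‖) := by
    rw [funext normval₂]
    have base := (aux_summable2 (a₁ := (ν+1)/2) (a₂ := (ν+3)/2) (b := ν/2)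
        (x := r * (ν/2/(1-r))^2 /
          ((ν/2/(1-r) + (y₁-μ₁)^2/(2*σ^2)) * (ν/2/(1-r) + (y₂-μ₂)^2/(2*σ^2))))
        (by linarith) (by linarith) hφ hx2 hx21).mul_left
      ((ν/2) ^ (ν/2 + 1) / ((1 - r) * Real.Gamma (ν/2)) / (2 * Real.pi * σ ^ 2) *
        (ν/2 / (1 - r)) ^ (ν/2 - 1) *
        (1/(ν/2/(1-r) + (y₁-μ₁)^2/(2*σ^2))) ^ ((ν+1)/2) *
        (1/(ν/2/(1-r) + (y₂-μ₂)^2/(2*σ^2))) ^ ((ν+3)/2))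
    refine base.congr fun k => ?_
    have hΓkφ : 0 < Real.Gamma ((k:ℝ) + ν/2) := Real.Gamma_pos_of_pos (by positivity)
    have hΓk1 : 0 < Real.Gamma ((k:ℝ) + (ν+1)/2) := Real.Gamma_pos_of_pos (by positivity)
    have hΓk3 : 0 < Real.Gamma ((k:ℝ) + (ν+3)/2) := Real.Gamma_pos_of_pos (by positivity)
    have hfac : (0:ℝ) < (Nat.factorial k : ℝ) := by positivity
    have hc := cAux_pos hφ hr0 hr1 hσ k
    have hL : (0:ℝ) < ((ν/2) ^ (ν/2 + 1) / ((1 - r) * Real.Gamma (ν/2)) / (2 * Real.pi * σ ^ 2) *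
        (ν/2 / (1 - r)) ^ (ν/2 - 1) *
        (1/(ν/2/(1-r) + (y₁-μ₁)^2/(2*σ^2))) ^ ((ν+1)/2) *
        (1/(ν/2/(1-r) + (y₂-μ₂)^2/(2*σ^2))) ^ ((ν+3)/2)) *
        (Real.Gamma ((k:ℝ)+(ν+1)/2) * Real.Gamma ((k:ℝ)+(ν+3)/2) /
          (Real.Gamma ((k:ℝ)+ν/2) * (Nat.factorial k : ℝ)) *
          (r * (ν/2/(1-r))^2 /
            ((ν/2/(1-r) + (y₁-μ₁)^2/(2*σ^2)) * (ν/2/(1-r) + (y₂-μ₂)^2/(2*σ^2)))) ^ k) := by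
      positivity
    have hR : (0:ℝ) < cAux (ν/2) r σ k *
        ((1/(ν/2/(1-r) + (y₁-μ₁)^2/(2*σ^2))) ^ ((k:ℝ)+(ν+1)/2) *
          Real.Gamma ((k:ℝ)+(ν+1)/2)) *
        ((1/(ν/2/(1-r) + (y₂-μ₂)^2/(2*σ^2))) ^ ((k:ℝ)+(ν+3)/2) *
          Real.Gamma ((k:ℝ)+(ν+3)/2)) := by positivity
    rw [← Real.exp_log hL, ← Real.exp_log hR]
    congr 1
    unfold cAux
    simp (disch := positivity) only [Real.log_mul, Real.log_div, Real.log_rpow,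
      Real.log_pow, Real.log_exp, Real.log_one]
    ring
  refine (e1.trans (integral_tsum_of_summable_integral_norm hInt₂ hSum₂).symm).trans ?_
  rw [tsum_congr val₂]
  -- now: ∑' k, S₂ k = RHS
  have hv₁ : (0:ℝ) < 1 + (1-r)*(y₁-μ₁)^2/(ν*σ^2) := by positivity
  have hv₂ : (0:ℝ) < 1 + (1-r)*(y₂-μ₂)^2/(ν*σ^2) := by positivity
  have hB₁v : ν/2/(1-r) + (y₁-μ₁)^2/(2*σ^2)
      = ν/2 * (1 + (1-r)*(y₁-μ₁)^2/(ν*σ^2))/(1-r) := by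
    field_simp
  have hB₂v : ν/2/(1-r) + (y₂-μ₂)^2/(2*σ^2)
      = ν/2 * (1 + (1-r)*(y₂-μ₂)^2/(ν*σ^2))/(1-r) := by
    field_simp
  have hΓ1 : 0 < Real.Gamma ((ν+1)/2) := Real.Gamma_pos_of_pos (by positivity)
  have hΓ3 : 0 < Real.Gamma ((ν+3)/2) := Real.Gamma_pos_of_pos (by positivity)
  rw [hyp2F1, ← tsum_mul_left, ← tsum_div_const]
  refine tsum_congr fun k => ?_
  have hΓkφ : 0 < Real.Gamma ((k:ℝ) + ν/2) := Real.Gamma_pos_of_pos (by positivity)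
  have hΓk1 : 0 < Real.Gamma ((k:ℝ) + (ν+1)/2) := Real.Gamma_pos_of_pos (by positivity)
  have hΓk3 : 0 < Real.Gamma ((k:ℝ) + (ν+3)/2) := Real.Gamma_pos_of_pos (by positivity)
  have hfac : (0:ℝ) < (Nat.factorial k : ℝ) := by positivity
  have hc := cAux_pos hφ hr0 hr1 hσ k
  rw [hB₁v, hB₂v]
  have hL : (0:ℝ) < cAux (ν/2) r σ k *
      ((1/(ν/2 * (1 + (1-r)*(y₁-μ₁)^2/(ν*σ^2))/(1-r))) ^ ((k:ℝ)+(ν+1)/2) *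
        Real.Gamma ((k:ℝ)+(ν+1)/2)) *
      ((1/(ν/2 * (1 + (1-r)*(y₂-μ₂)^2/(ν*σ^2))/(1-r))) ^ ((k:ℝ)+(ν+3)/2) *
        Real.Gamma ((k:ℝ)+(ν+3)/2)) := by positivity
  have hR : (0:ℝ) < 2 * (1 - r) ^ (ν / 2 + 2) * Real.Gamma ((ν + 1) / 2) *
      Real.Gamma ((ν + 3) / 2) / (Real.pi * ν ^ 2 * σ ^ 2 * Real.Gamma (ν / 2) ^ 2) *
      (Real.Gamma ((k:ℝ) + (ν + 1) / 2) * Real.Gamma ((k:ℝ) + (ν + 3) / 2) *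
        Real.Gamma (ν / 2) /
        (Real.Gamma ((ν + 1) / 2) * Real.Gamma ((ν + 3) / 2) * Real.Gamma ((k:ℝ) + ν / 2)) *
        (r / ((1 + (1 - r) * (y₁ - μ₁) ^ 2 / (ν * σ ^ 2)) *
          (1 + (1 - r) * (y₂ - μ₂) ^ 2 / (ν * σ ^ 2)))) ^ k / (Nat.factorial k : ℝ)) /
      ((1 + (1 - r) * (y₁ - μ₁) ^ 2 / (ν * σ ^ 2)) ^ ((ν + 1) / 2) *
        (1 + (1 - r) * (y₂ - μ₂) ^ 2 / (ν * σ ^ 2)) ^ ((ν + 3) / 2)) := by positivity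
  rw [← Real.exp_log hL, ← Real.exp_log hR]
  congr 1
  unfold cAux
  simp (disch := positivity) only [Real.log_mul, Real.log_div, Real.log_rpow,
    Real.log_pow, Real.log_exp, Real.log_one]
  ring
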